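/- (Erosion criterion implies eroder — edge speed bound.) Let φ be a non-constant monotone local map on {0,1}^{Z^d}, let L be a polar function of dimension σ, and for 1 ≤ s ≤ σ define δ_s := sup_{A ∈ 𝒜(φ)} inf_{i ∈ A} L_s(i) and, for a configuration x, r_s(x) := sup{L_s(i) : i ∈ Z^d, x(i) = 0} (with r_s of the all-one configuration := −∞). Let (X_n)_{n≥0} be the deterministic cellular automaton X_{n+1}(i) = φ(θ_i X_n). Then r_s(X_n) ≤ r_s(X_0) − δ_s n for all n ≥ 0 and 1 ≤ s ≤ σ. -/

import Mathlib

abbrev Conf (d : ℕ) := (Fin d → ℤ) → Bool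

def IsLocal {d : ℕ} (φ : Conf d → Bool) : Prop :=
  ∃ Δ : Finset (Fin d → ℤ), ∀ x y : Conf d, (∀ i ∈ Δ, x i = y i) → φ x = φ y

def IsMonotoneMap {d : ℕ} (φ : Conf d → Bool) : Prop :=
  ∀ x y : Conf d, (∀ i, x i ≤ y i) → φ x ≤ φ y

def ind {d : ℕ} (A : Finset (Fin d → ℤ)) : Conf d := fun i => decide (i ∈ A)

/-- `𝒜(φ)`: minimal finite sets `A` with `φ(1_A) = 1`. -/
def minUp {d : ℕ} (φ : Conf d → Bool) : Set (Finset (Fin d → ℤ)) :=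
  {A | φ (ind A) = true ∧ ∀ B ⊆ A, φ (ind B) = true → B = A}

/-- The coercion `ℤ^d → ℝ^d`. -/
def toR {d : ℕ} (i : Fin d → ℤ) : Fin d → ℝ := fun k => (i k : ℝ)

/-- The translation operator `(θ_i y)(j) = y(i + j)`. -/
def shift {d : ℕ} (i : Fin d → ℤ) (y : Conf d) : Conf d := fun j => y (i + j)

/-- `r_L(x) := sup{L(i) : i ∈ ℤ^d, x(i) = 0}` as an extended real (`⊥ = -∞` if
`x` has no zeros). -/
noncomputable def edgeSup {d : ℕ} (L : (Fin d → ℝ) →ₗ[ℝ] ℝ) (x : Conf d) : EReal :=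
  sSup ((fun i => ((L (toR i) : ℝ) : EReal)) '' {i | x i = false})

/-- `δ_L(φ) := sup_{A ∈ 𝒜(φ)} inf_{i ∈ A} L(i)`. -/
noncomputable def speed {d : ℕ} (φ : Conf d → Bool) (L : (Fin d → ℝ) →ₗ[ℝ] ℝ) : ℝ :=
  sSup {r : ℝ | ∃ A ∈ minUp φ, r = sInf ((fun i => L (toR i)) '' (A : Set (Fin d → ℤ)))}

lemma ereal_add_add (x : EReal) (a b : ℝ) : (x + a) + b = x + ((a + b : ℝ) : EReal) := by
  induction x using EReal.rec with
  | bot => simp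
  | coe y => norm_cast; ring
  | top => simp

/-- Edge speed bound: for the deterministic cellular automaton with rule `φ`,
`r_s(X_n) ≤ r_s(X_0) - δ_s n` for every coordinate `L_s` of a polar function. -/
theorem stmt8 {d σ : ℕ} (hσ : 2 ≤ σ) (φ : Conf d → Bool)
    (hloc : IsLocal φ) (hmono : IsMonotoneMap φ) (hnc : ∃ x y : Conf d, φ x ≠ φ y)
    (L : Fin σ → ((Fin d → ℝ) →ₗ[ℝ] ℝ))
    (hpolar : ∀ z : Fin d → ℝ, ∑ s : Fin σ, L s z = 0)
    (X : ℕ → Conf d) (hX : ∀ n i, X (n + 1) i = φ (shift i (X n))) :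
    ∀ (n : ℕ) (s : Fin σ),
      edgeSup (L s) (X n) ≤ edgeSup (L s) (X 0) + ((-((n : ℝ) * speed φ (L s)) : ℝ) : EReal) := by
  classical
  -- φ of the all-ones configuration is true
  have hones : φ (fun _ => true) = true := by
    by_contra h
    have hfalse : φ (fun _ => true) = false := by simpa using h
    obtain ⟨x, y, hxy⟩ := hnc
    have hall : ∀ z : Conf d, φ z = false := by
      intro z
      have hle := hmono z (fun _ => true) (fun i => Bool.le_true _)
      rw [hfalse] at hle
      cases hz : φ z with
      | false => rfl
      | true => rw [hz] at hle; exact absurd hle (by decide)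
    exact hxy ((hall x).trans (hall y).symm)
  obtain ⟨Δ, hΔ⟩ := hloc
  -- minUp is nonempty
  have hΔtrue : φ (ind Δ) = true := by
    have := hΔ (ind Δ) (fun _ => true) (fun i hi => by simp [ind, hi])
    rw [this, hones]
  have hminne : ∃ A, A ∈ minUp φ := by
    let 𝒮 := Δ.powerset.filter (fun B => φ (ind B) = true)
    have hne : 𝒮.Nonempty := ⟨Δ, by simp [𝒮, hΔtrue]⟩
    obtain ⟨A, hA𝒮, hmin⟩ := 𝒮.exists_min_image Finset.card hne
    refine ⟨A, (Finset.mem_filter.mp hA𝒮).2, ?_⟩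
    intro B hBA hB
    have hAΔ : A ⊆ Δ := Finset.mem_powerset.mp (Finset.mem_filter.mp hA𝒮).1
    have hB𝒮 : B ∈ 𝒮 := Finset.mem_filter.mpr ⟨Finset.mem_powerset.mpr (hBA.trans hAΔ), hB⟩
    exact Finset.eq_of_subset_of_card_le hBA (hmin B hB𝒮)
  obtain ⟨A₀, hA₀⟩ := hminne
  -- every element of minUp is nonempty
  have hAne : ∀ A ∈ minUp φ, A.Nonempty := by
    intro A hA
    rcases A.eq_empty_or_nonempty with h | h
    · exfalso
      subst h
      have h0 : φ (ind (∅ : Finset (Fin d → ℤ))) = true := hA.1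
      obtain ⟨x, y, hxy⟩ := hnc
      have hall : ∀ z : Conf d, φ z = true := by
        intro z
        have hle := hmono (ind (∅ : Finset (Fin d → ℤ))) z (fun i => by simp [ind])
        rw [h0] at hle
        cases hz : φ z with
        | true => rfl
        | false => rw [hz] at hle; exact absurd hle (by decide)
      exact hxy ((hall x).trans (hall y).symm)
    · exact h
  -- the one-step bound
  have step : ∀ (n : ℕ) (s : Fin σ),
      edgeSup (L s) (X (n + 1)) ≤ edgeSup (L s) (X n) + ((-(speed φ (L s)) : ℝ) : EReal) := by
    intro n s
    have key : ∀ i, X (n + 1) i = false → ∀ A ∈ minUp φ, ∃ j ∈ A, X n (i + j) = false := by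
      intro i hi A hA
      by_contra h
      push_neg at h
      have hle : ∀ j, ind A j ≤ shift i (X n) j := by
        intro j
        by_cases hj : j ∈ A
        · have := h j hj
          have ht : X n (i + j) = true := by simpa using this
          simp [ind, hj, shift, ht]
        · simp [ind, hj]
      have hφle := hmono _ _ hle
      rw [hA.1] at hφle
      have : φ (shift i (X n)) = true := by
        cases hz : φ (shift i (X n)) with
        | true => rfl
        | false => rw [hz] at hφle; exact absurd hφle (by decide)
      rw [hX n i, this] at hi
      exact absurd hi (by simp)
    by_cases htop : edgeSup (L s) (X n) = ⊤
    · rw [htop]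
      rw [EReal.top_add_coe]
      exact le_top
    by_cases hbot : edgeSup (L s) (X n) = ⊥
    · have hXn : ∀ i, X n i = true := by
        intro i
        by_contra h
        have hf : X n i = false := by simpa using h
        have : ((L s (toR i) : ℝ) : EReal) ≤ edgeSup (L s) (X n) :=
          le_sSup ⟨i, hf, rfl⟩
        rw [hbot] at this
        simp at this
      have hX1 : ∀ i, X (n + 1) i = true := by
        intro i
        rw [hX]
        have : shift i (X n) = fun _ => true := funext fun j => hXn (i + j)
        rw [this, hones]
      have hempty : {i | X (n + 1) i = false} = (∅ : Set (Fin d → ℤ)) := by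
        ext i; simp [hX1 i]
      have : edgeSup (L s) (X (n + 1)) = ⊥ := by
        unfold edgeSup
        rw [hempty]
        simp
      rw [this, hbot, EReal.bot_add]
    · obtain ⟨c, hc⟩ : ∃ c : ℝ, edgeSup (L s) (X n) = (c : EReal) :=
        ⟨(edgeSup (L s) (X n)).toReal, (EReal.coe_toReal htop hbot).symm⟩
      rw [hc]
      have hcoe : ((c : EReal) + ((-(speed φ (L s)) : ℝ) : EReal)) = ((c - speed φ (L s) : ℝ) : EReal) := by
        rw [sub_eq_add_neg, ← EReal.coe_add]
      rw [hcoe]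
      apply sSup_le
      rintro x ⟨i, hi, rfl⟩
      rw [EReal.coe_le_coe_iff]
      have hδ : speed φ (L s) ≤ c - L s (toR i) := by
        unfold speed
        refine csSup_le ⟨_, A₀, hA₀, rfl⟩ ?_
        rintro b ⟨A, hA, rfl⟩
        obtain ⟨j, hjA, hj⟩ := key i hi A hA
        have h1 : sInf ((fun i => L s (toR i)) '' (A : Set (Fin d → ℤ))) ≤ L s (toR j) :=
          csInf_le ((A.finite_toSet.image _).bddBelow) ⟨j, hjA, rfl⟩
        have h2 : L s (toR (i + j)) ≤ c := by
          have hle : ((L s (toR (i + j)) : ℝ) : EReal) ≤ edgeSup (L s) (X n) :=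
            le_sSup ⟨i + j, hj, rfl⟩
          rw [hc] at hle
          exact_mod_cast hle
        have h3 : toR (i + j) = toR i + toR j := by
          funext k; simp [toR]
        rw [h3, map_add] at h2
        linarith
      linarith
  intro n s
  induction n with
  | zero => simp
  | succ n ih =>
    calc edgeSup (L s) (X (n + 1))
        ≤ edgeSup (L s) (X n) + ((-(speed φ (L s)) : ℝ) : EReal) := step n s
      _ ≤ (edgeSup (L s) (X 0) + ((-((n : ℝ) * speed φ (L s)) : ℝ) : EReal))
            + ((-(speed φ (L s)) : ℝ) : EReal) := add_le_add_left ih _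
      _ = edgeSup (L s) (X 0) + ((-(((n + 1 : ℕ) : ℝ) * speed φ (L s)) : ℝ) : EReal) := by
          have h4 : (-((n : ℝ) * speed φ (L s)) + -(speed φ (L s)))
              = -(((n + 1 : ℕ) : ℝ) * speed φ (L s)) := by push_cast; ring
          rw [ereal_add_add, h4]
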